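/- Let 𝕀 be a symmetric invertible 3×3 real matrix (the moment of inertia), let Δt > 0, and let Π, Π′, A, B ∈ ℝ³ satisfy one step of the deterministic rigid-body midpoint integrator: d⁺(Δt,ξ,A) = Π, d⁺(Δt,ξ,B) = d⁻(Δt,ξ,A), Π′ = d⁻(Δt,ξ,B), where ξ := (1/2)·𝕀⁻¹((A+B)/2). Then the kinetic energy is exactly conserved: Π′ · (𝕀⁻¹Π′) = Π · (𝕀⁻¹Π). -/

import Mathlib

open Matrix

noncomputable section

/-- `d⁺(h,ξ,Π) = Π + (h/2) ξ×Π − (h²/4)(ξ·Π)ξ`. -/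
def dplus (h : ℝ) (ξ Pv : Fin 3 → ℝ) : Fin 3 → ℝ :=
  Pv + (h / 2) • (ξ ⨯₃ Pv) - (h ^ 2 / 4 * (ξ ⬝ᵥ Pv)) • ξ

/-- `d⁻(h,ξ,Π) = Π − (h/2) ξ×Π − (h²/4)(ξ·Π)ξ`. -/
def dminus (h : ℝ) (ξ Pv : Fin 3 → ℝ) : Fin 3 → ℝ :=
  Pv - (h / 2) • (ξ ⨯₃ Pv) - (h ^ 2 / 4 * (ξ ⬝ᵥ Pv)) • ξ

/-- The deterministic rigid-body midpoint integrator (with midpoint body angular velocity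
`ξ = (1/2)𝕀⁻¹((A+B)/2)`, `𝕀` the symmetric invertible moment of inertia matrix) exactly
conserves the kinetic energy `(1/2)Π·(𝕀⁻¹Π)`. -/
theorem midpoint_step_conserves_energy
    (I : Matrix (Fin 3) (Fin 3) ℝ) (hIsymm : Iᵀ = I) (hIinv : IsUnit I.det)
    (Δt : ℝ) (hΔt : 0 < Δt) (ξ Pv Pv' A B : Fin 3 → ℝ)
    (hξ : ξ = (1 / 2 : ℝ) • I⁻¹.mulVec ((1 / 2 : ℝ) • (A + B)))
    (h1 : dplus Δt ξ A = Pv)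
    (h2 : dplus Δt ξ B = dminus Δt ξ A)
    (h3 : Pv' = dminus Δt ξ B) :
    Pv' ⬝ᵥ I⁻¹.mulVec Pv' = Pv ⬝ᵥ I⁻¹.mulVec Pv := by
  -- `I⁻¹ (A + B) = 4 ξ`
  have hMu : I⁻¹.mulVec (A + B) = (4 : ℝ) • ξ := by
    rw [hξ, Matrix.mulVec_smul]
    funext i
    simp only [Pi.smul_apply, smul_eq_mul]
    ring
  -- symmetry of `I⁻¹` as a bilinear form
  have hsym : ∀ v w : Fin 3 → ℝ, v ⬝ᵥ I⁻¹.mulVec w = w ⬝ᵥ I⁻¹.mulVec v := by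
    intro v w
    have hM : (I⁻¹)ᵀ = I⁻¹ := by rw [Matrix.transpose_nonsing_inv, hIsymm]
    rw [Matrix.dotProduct_mulVec]
    nth_rewrite 1 [← hM]
    rw [Matrix.vecMul_transpose, dotProduct_comm]
  -- scalar components of the middle equation
  have h20 := congrFun h2 0
  have h21 := congrFun h2 1
  have h22 := congrFun h2 2
  simp only [dplus, dminus, crossProduct, LinearMap.mk₂_apply, dotProduct, Fin.sum_univ_three, Pi.add_apply,
    Pi.sub_apply, Pi.smul_apply, smul_eq_mul, Matrix.vecHead, Matrix.vecTail,
    Matrix.cons_val_zero, Matrix.cons_val_one, Matrix.head_cons, Matrix.cons_val_two, Matrix.tail_cons, Matrix.cons_val',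
    Matrix.cons_val_fin_one, Matrix.empty_val', Function.comp_apply, Fin.succ_zero_eq_one,
    Fin.succ_one_eq_two, of_apply] at h20 h21 h22
  -- key identity 1 : Pv − Pv' = Δt ξ × (A + B)
  have key1 : Pv - Pv' = Δt • (ξ ⨯₃ (A + B)) := by
    rw [← h1, h3]
    funext i
    fin_cases i <;>
      simp [dplus, dminus, crossProduct, dotProduct, Fin.sum_univ_three, Matrix.vecHead, Matrix.vecTail]
    · linear_combination -h20
    · linear_combination -h21
    · linear_combination -h22
  -- key identity 2 : Pv + Pv' = (1 − (Δt²/4)|ξ|²)(A + B)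
  have key2 : Pv + Pv' = (1 - Δt ^ 2 / 4 * (ξ ⬝ᵥ ξ)) • (A + B) := by
    rw [← h1, h3]
    funext i
    fin_cases i <;>
      simp [dplus, dminus, crossProduct, dotProduct, Fin.sum_univ_three, Matrix.vecHead, Matrix.vecTail]
    · linear_combination (Δt / 2 * ξ 2) * h21 - (Δt / 2 * ξ 1) * h22
    · linear_combination (Δt / 2 * ξ 0) * h22 - (Δt / 2 * ξ 2) * h20
    · linear_combination (Δt / 2 * ξ 1) * h20 - (Δt / 2 * ξ 0) * h21
  -- energy difference as a bilinear pairing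
  have expand : (Pv - Pv') ⬝ᵥ I⁻¹.mulVec (Pv + Pv')
      = Pv ⬝ᵥ I⁻¹.mulVec Pv - Pv' ⬝ᵥ I⁻¹.mulVec Pv' := by
    rw [Matrix.mulVec_add, sub_dotProduct, dotProduct_add, dotProduct_add]
    linear_combination hsym Pv Pv'
  have hcross : (ξ ⨯₃ (A + B)) ⬝ᵥ ξ = 0 := by
    simp [crossProduct, dotProduct, Fin.sum_univ_three, Matrix.vecHead, Matrix.vecTail]
    ring
  have hz : (Pv - Pv') ⬝ᵥ I⁻¹.mulVec (Pv + Pv') = 0 := by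
    rw [key1, key2, Matrix.mulVec_smul, hMu, smul_dotProduct, dotProduct_smul,
      dotProduct_smul, hcross]
    simp
  linear_combination - expand.symm.trans hz
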